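/- Generation for variables: Let ≤ be a binary relation on types satisfying the kernel axioms. If Γ ⊢ x : A is derivable, where the declarations in Γ bind pairwise distinct variables and x:B occurs in Γ, then B ≤ A. -/

import Mathlib

/-- Intersection types: base types, intersection, omega, arrow, product. -/
inductive Ty (X : Type) : Type
  | base : X → Ty X
  | inter : Ty X → Ty X → Ty X
  | omega : Ty X
  | arrow : Ty X → Ty X → Ty X
  | prod : Ty X → Ty X → Ty X

/-- Lambda terms with pairs and projections, named variables. -/
inductive Tm : Type
  | var : ℕ → Tm
  | lam : ℕ → Tm → Tm
  | app : Tm → Tm → Tm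
  | pair : Tm → Tm → Tm
  | fst : Tm → Tm
  | snd : Tm → Tm

/-- Free variables of a term. -/
def Tm.fv : Tm → Finset ℕ
  | .var x => {x}
  | .lam x t => t.fv.erase x
  | .app t u => t.fv ∪ u.fv
  | .pair t u => t.fv ∪ u.fv
  | .fst t => t.fv
  | .snd t => t.fv

/-- All variables (free or bound) occurring in a term. -/
def Tm.allVars : Tm → Finset ℕ
  | .var x => {x}
  | .lam x t => insert x t.allVars
  | .app t u => t.allVars ∪ u.allVars
  | .pair t u => t.allVars ∪ u.allVars
  | .fst t => t.allVars
  | .snd t => t.allVars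

def Tm.size : Tm → ℕ
  | .var _ => 1
  | .lam _ t => t.size + 1
  | .app t u => t.size + u.size + 1
  | .pair t u => t.size + u.size + 1
  | .fst t => t.size + 1
  | .snd t => t.size + 1

/-- Renaming of the free occurrences of a variable `x` into `z`. -/
def Tm.rename (x z : ℕ) : Tm → Tm
  | .var y => if y = x then .var z else .var y
  | .lam y t => if y = x then .lam y t else .lam y (t.rename x z)
  | .app t u => .app (t.rename x z) (u.rename x z)
  | .pair t u => .pair (t.rename x z) (u.rename x z)
  | .fst t => .fst (t.rename x z)
  | .snd t => .snd (t.rename x z)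

theorem Tm.size_rename (x z : ℕ) (t : Tm) : (t.rename x z).size = t.size := by
  induction t with
  | var y => by_cases h : y = x <;> simp [Tm.rename, Tm.size, h]
  | lam y t ih => by_cases h : y = x <;> simp [Tm.rename, Tm.size, h, ih]
  | app t u iht ihu => simp [Tm.rename, Tm.size, iht, ihu]
  | pair t u iht ihu => simp [Tm.rename, Tm.size, iht, ihu]
  | fst t ih => simp [Tm.rename, Tm.size, ih]
  | snd t ih => simp [Tm.rename, Tm.size, ih]

/-- A variable not belonging to the finite set `s`. -/
def freshVar (s : Finset ℕ) : ℕ := (s.sup id) + 1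

/-- Capture-avoiding substitution `t[u/x]`: bound variables are renamed to
fresh ones when they would capture a free variable of `u`. -/
def Tm.subst (t : Tm) (x : ℕ) (u : Tm) : Tm :=
  match t with
  | .var y => if y = x then u else .var y
  | .app t₁ t₂ => .app (t₁.subst x u) (t₂.subst x u)
  | .pair t₁ t₂ => .pair (t₁.subst x u) (t₂.subst x u)
  | .fst t => .fst (t.subst x u)
  | .snd t => .snd (t.subst x u)
  | .lam y t =>
      if y = x then .lam y t
      else if y ∈ u.fv then
        let z := freshVar (u.fv ∪ t.allVars ∪ {x})
        .lam z ((t.rename y z).subst x u)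
      else .lam y (t.subst x u)
  termination_by t.size
  decreasing_by all_goals simp [Tm.size, Tm.size_rename] <;> omega

/-- The typing judgment of the intersection type system with arrow and
product types, parameterized by a subtyping relation `le`. -/
inductive Typing {X : Type} (le : Ty X → Ty X → Prop) : List (ℕ × Ty X) → Tm → Ty X → Prop
  | var (Γ Δ : List (ℕ × Ty X)) (x : ℕ) (A : Ty X) :
      Typing le (Γ ++ (x, A) :: Δ) (.var x) A
  | sub {Γ t A B} : Typing le Γ t A → le A B → Typing le Γ t B
  | inter {Γ t A B} : Typing le Γ t A → Typing le Γ t B → Typing le Γ t (.inter A B)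
  | omega (Γ : List (ℕ × Ty X)) (t : Tm) : Typing le Γ t .omega
  | abs {Γ x t A B} : Typing le (Γ ++ [(x, A)]) t B → Typing le Γ (.lam x t) (.arrow A B)
  | app {Γ t u A B} : Typing le Γ t (.arrow A B) → Typing le Γ u A → Typing le Γ (.app t u) B
  | pair {Γ t u A B} : Typing le Γ t A → Typing le Γ u B → Typing le Γ (.pair t u) (.prod A B)
  | proj1 {Γ t A B} : Typing le Γ t (.prod A B) → Typing le Γ (.fst t) A
  | proj2 {Γ t A B} : Typing le Γ t (.prod A B) → Typing le Γ (.snd t) B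

/-- The kernel properties of a subtyping relation: preorder with `∩` a
greatest lower bound and `Ω` a top element. -/
structure KernelAxioms {X : Type} (le : Ty X → Ty X → Prop) : Prop where
  refl : ∀ A, le A A
  trans : ∀ {A B C}, le A B → le B C → le A C
  inter_l1 : ∀ A B, le (.inter A B) A
  inter_l2 : ∀ A B, le (.inter A B) B
  inter_r : ∀ {A B C}, le C A → le C B → le C (.inter A B)
  omega_r : ∀ A, le A .omega

/-- Iterated intersection `A₁ ∩ … ∩ Aₙ` of a list of types, the empty
intersection being `Ω`. -/
def interList {X : Type} : List (Ty X) → Ty X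
  | [] => .omega
  | [A] => A
  | A :: l => .inter A (interList l)

/-- β-reduction: the congruence closure of `(λx.t) u → t[u/x]`. -/
inductive Beta : Tm → Tm → Prop
  | beta (x : ℕ) (t u : Tm) : Beta (.app (.lam x t) u) (t.subst x u)
  | lam {t t'} (x : ℕ) : Beta t t' → Beta (.lam x t) (.lam x t')
  | appL {t t'} (u : Tm) : Beta t t' → Beta (.app t u) (.app t' u)
  | appR {u u'} (t : Tm) : Beta u u' → Beta (.app t u) (.app t u')
  | pairL {t t'} (u : Tm) : Beta t t' → Beta (.pair t u) (.pair t' u)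
  | pairR {u u'} (t : Tm) : Beta u u' → Beta (.pair t u) (.pair t u')
  | fst {t t'} : Beta t t' → Beta (.fst t) (.fst t')
  | snd {t t'} : Beta t t' → Beta (.snd t) (.snd t')

/-- π-reduction: the congruence closure of `π₁⟨t,u⟩ → t` and `π₂⟨t,u⟩ → u`. -/
inductive Pi : Tm → Tm → Prop
  | fstPair (t u : Tm) : Pi (.fst (.pair t u)) t
  | sndPair (t u : Tm) : Pi (.snd (.pair t u)) u
  | lam {t t'} (x : ℕ) : Pi t t' → Pi (.lam x t) (.lam x t')
  | appL {t t'} (u : Tm) : Pi t t' → Pi (.app t u) (.app t' u)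
  | appR {u u'} (t : Tm) : Pi u u' → Pi (.app t u) (.app t u')
  | pairL {t t'} (u : Tm) : Pi t t' → Pi (.pair t u) (.pair t' u)
  | pairR {u u'} (t : Tm) : Pi u u' → Pi (.pair t u) (.pair t u')
  | fst {t t'} : Pi t t' → Pi (.fst t) (.fst t')
  | snd {t t'} : Pi t t' → Pi (.snd t) (.snd t')

/-- Generation for variables: if `Γ ⊢ x : A` with the declarations of `Γ`
binding pairwise distinct variables and `x:B ∈ Γ`, then `B ≤ A`. -/

lemma nodup_mem_eq {X : Type} {Γ Δ : List (ℕ × Ty X)} {x : ℕ} {A B : Ty X}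
    (hnd : ((Γ ++ (x, A) :: Δ).map Prod.fst).Nodup)
    (hmem : (x, B) ∈ Γ ++ (x, A) :: Δ) : B = A := by
  simp only [List.map_append, List.map_cons, List.nodup_append] at hnd
  rcases List.mem_append.1 hmem with hΓ | hΔ
  · exact absurd (List.mem_map_of_mem (f := Prod.fst) hΓ) (fun hx => hnd.2.2 _ hx _ List.mem_cons_self rfl)
  · rcases List.mem_cons.1 hΔ with heq | hΔ
    · exact congrArg Prod.snd heq
    · exact absurd (List.mem_map_of_mem (f := Prod.fst) hΔ) (fun hx => (List.nodup_cons.1 hnd.2.1).1 hx)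

theorem generation_var {X : Type} [Countable X] {le : Ty X → Ty X → Prop}
    (hker : KernelAxioms le) {Γ : List (ℕ × Ty X)} {x : ℕ} {A B : Ty X}
    (hnd : (Γ.map Prod.fst).Nodup) (hmem : (x, B) ∈ Γ)
    (h : Typing le Γ (.var x) A) :
    le B A := by
  generalize ht : Tm.var x = t at h
  induction h with
  | var Γ' Δ x' A =>
      cases ht
      exact (nodup_mem_eq hnd hmem) ▸ hker.refl A
  | sub h hle ih => exact hker.trans (ih hnd hmem ht) hle
  | inter h1 h2 ih1 ih2 => exact hker.inter_r (ih1 hnd hmem ht) (ih2 hnd hmem ht)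
  | omega => exact hker.omega_r B
  | abs h ih => cases ht
  | app h1 h2 ih1 ih2 => cases ht
  | pair h1 h2 ih1 ih2 => cases ht
  | proj1 h ih => cases ht
  | proj2 h ih => cases ht
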